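/- For positive integers a, b, r, s, the ordinary shuffle product in Q⟨x,y⟩ satisfies x^a y^r ⧢ x^b y^s = Σ_{α₁+⋯+α_{r+s}=a+b, α_i≥0} [ Σ_{l=1}^{r} C(α₁,a) C(r+s−l−1, r−l) Π_{j=l+2}^{r+s} δ_{α_j,0} + Σ_{l=1}^{s} C(α₁,b) C(r+s−l−1, s−l) Π_{j=l+2}^{r+s} δ_{α_j,0} ] x^{α₁} y x^{α₂} y ⋯ x^{α_{r+s}} y. -/

import Mathlib

open scoped BigOperators

noncomputable section

/-- `Q⟨x,y⟩`: the free noncommutative Q-algebra on two letters. -/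
abbrev H0 : Type := MonoidAlgebra ℚ (FreeMonoid (Fin 2))

/-- The word `l` as an element of `Q⟨x,y⟩`. -/
def wd0 (l : List (Fin 2)) : H0 :=
  MonoidAlgebra.of ℚ (FreeMonoid (Fin 2)) (FreeMonoid.ofList l)

/-- The letter `x`. -/
def wx0 : H0 := wd0 [0]
/-- The letter `y`. -/
def wy0 : H0 := wd0 [1]

/-- The ordinary shuffle product on words. -/
def shW0 : List (Fin 2) → List (Fin 2) → H0
  | [], w => wd0 w
  | a :: w, [] => wd0 (a :: w)
  | a :: w1, b :: w2 =>
      wd0 [a] * shW0 w1 (b :: w2) + wd0 [b] * shW0 (a :: w1) w2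
  termination_by w1 w2 => w1.length + w2.length

/-- The shuffle product on `Q⟨x,y⟩`, extended Q-bilinearly. -/
def shH0 (u v : H0) : H0 :=
  u.coeff.sum fun w1 c1 => v.coeff.sum fun w2 c2 =>
    (c1 * c2) • shW0 (FreeMonoid.toList w1) (FreeMonoid.toList w2)

-- basic algebra
lemma wd0_mul (u v : List (Fin 2)) : wd0 u * wd0 v = wd0 (u ++ v) := by
  simp [wd0, ← map_mul]

lemma wd0_pow (c : Fin 2) (n : ℕ) : wd0 [c] ^ n = wd0 (List.replicate n c) := by
  induction n with
  | zero => rw [pow_zero]; rfl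
  | succ n ih => rw [pow_succ', ih, wd0_mul]; simp [List.replicate_succ]

lemma shH0_wd (u v : List (Fin 2)) : shH0 (wd0 u) (wd0 v) = shW0 u v := by
  have h : (wd0 v).coeff = Finsupp.single (FreeMonoid.ofList v) (1:ℚ) := rfl
  rw [shH0]
  have h1 : (wd0 u).coeff = Finsupp.single (FreeMonoid.ofList u) (1:ℚ) := rfl
  rw [h1, h]
  rw [Finsupp.sum_single_index, Finsupp.sum_single_index] <;>
    simp [FreeMonoid.toList_ofList]

lemma monomial (a r : ℕ) : wx0 ^ a * wy0 ^ r =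
    wd0 (List.replicate a 0 ++ List.replicate r 1) := by
  rw [wx0, wy0, wd0_pow, wd0_pow, wd0_mul]

-- shuffle of pure y words
lemma wd0_mul_smul (c : ℚ) (a : Fin 2) (w : List (Fin 2)) :
    wd0 [a] * (c • wd0 w) = c • wd0 (a :: w) := by
  rw [mul_smul_comm, wd0_mul]; rfl

lemma shW_yy (r s : ℕ) : shW0 (List.replicate r 1) (List.replicate s 1)
    = ((r+s).choose r : ℚ) • wd0 (List.replicate (r+s) 1) := by
  induction r generalizing s with
  | zero => simp [shW0]
  | succ r ihr =>
    induction s with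
    | zero =>
      rw [List.replicate_succ]
      simp only [List.replicate_zero]
      rw [show shW0 (1 :: List.replicate r 1) [] = wd0 (1 :: List.replicate r 1) from by
        rw [shW0]]
      simp [List.replicate_succ]
    | succ s ihs =>
      rw [List.replicate_succ, List.replicate_succ (n := s)]
      rw [show shW0 (1 :: List.replicate r 1) (1 :: List.replicate s 1)
          = wd0 [1] * shW0 (List.replicate r 1) (1 :: List.replicate s 1)
            + wd0 [1] * shW0 (1 :: List.replicate r 1) (List.replicate s 1) from by
        rw [shW0]]
      rw [← List.replicate_succ, ← List.replicate_succ, ihr (s+1), ihs]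
      rw [wd0_mul_smul, wd0_mul_smul, ← List.replicate_succ, ← List.replicate_succ]
      have h1 : r + (s+1) + 1 = r + 1 + (s + 1) := by ring
      have h2 : r + 1 + s + 1 = r + 1 + (s + 1) := by ring
      rw [h1, h2, ← add_smul]
      congr 1
      rw [show r+(s+1) = r+s+1 by ring, show r+1+s = r+s+1 by ring,
        show r+1+(s+1) = (r+s+1)+1 by ring, ← Nat.cast_add, Nat.choose_succ_succ (r+s+1) r]

def hd {k : ℕ} (α : Fin k → ℕ) : ℕ := if h : 0 < k then α ⟨0, h⟩ else 0
def dd {k : ℕ} (t : ℕ) (α : Fin k → ℕ) : ℕ :=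
  ∏ j : Fin k, if t ≤ (j:ℕ) ∧ α j ≠ 0 then 0 else 1
def AA (r s : ℕ) {k : ℕ} (α : Fin k → ℕ) : ℕ :=
  ∑ i ∈ Finset.range r, (r+s-i-2).choose (r-i-1) * dd (i+2) α
def wrd {k : ℕ} (α : Fin k → ℕ) : H0 := (List.ofFn fun j => wx0 ^ α j * wy0).prod
def cf (a b r s : ℕ) {k : ℕ} (α : Fin k → ℕ) : ℕ :=
  (hd α).choose a * AA r s α + (hd α).choose b * AA s r α
def RHS (k a b r s : ℕ) : H0 :=
  ∑ α ∈ Finset.Nat.antidiagonalTuple k (a+b), (cf a b r s α : ℚ) • wrd α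

lemma hd_cons {k : ℕ} (p : ℕ) (β : Fin k → ℕ) : hd (Fin.cons p β) = p := by
  rw [hd, dif_pos (Nat.succ_pos k)]
  have : (⟨0, Nat.succ_pos k⟩ : Fin (k+1)) = 0 := rfl
  rw [this, Fin.cons_zero]

lemma dd_cons {k : ℕ} (t p : ℕ) (β : Fin k → ℕ) :
    dd (t+1) (Fin.cons p β) = dd t β := by
  rw [dd, dd, Fin.prod_univ_succ]
  simp only [Fin.cons_zero, Fin.cons_succ, Fin.val_zero, Fin.val_succ]
  rw [if_neg (by omega), one_mul]
  apply Finset.prod_congr rfl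
  intro j _
  congr 1
  simp only [eq_iff_iff]
  constructor <;> (rintro ⟨h1, h2⟩; exact ⟨by omega, h2⟩)

lemma dd_eq_ite {k : ℕ} (t : ℕ) (α : Fin k → ℕ) :
    dd t α = if ∀ j : Fin k, t ≤ (j:ℕ) → α j = 0 then 1 else 0 := by
  rw [dd]
  split
  · next h => exact Finset.prod_eq_one fun j _ => if_neg (by push_neg; intro h2; exact h j h2)
  · next h =>
    push_neg at h
    obtain ⟨j, hj1, hj2⟩ := h
    exact Finset.prod_eq_zero (Finset.mem_univ j) (if_pos ⟨hj1, hj2⟩)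

lemma AA_cons {k : ℕ} (r s p : ℕ) (β : Fin k → ℕ) :
    AA r s (Fin.cons p β) = ∑ i ∈ Finset.range r, (r+s-i-2).choose (r-i-1) * dd (i+1) β := by
  rw [AA]
  exact Finset.sum_congr rfl fun i _ => by rw [show i+2 = (i+1)+1 from rfl, dd_cons]

lemma wrd_cons {k : ℕ} (p : ℕ) (β : Fin k → ℕ) :
    wrd (Fin.cons p β) = wx0 ^ p * wy0 * wrd β := by
  rw [wrd, wrd, List.ofFn_succ]
  simp only [Fin.cons_zero, Fin.cons_succ, List.prod_cons]

lemma RHS_symm (k a b r s : ℕ) : RHS k a b r s = RHS k b a s r := by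
  rw [RHS, RHS, show b+a = a+b from by ring]
  exact Finset.sum_congr rfl fun α _ => by rw [cf, cf, add_comm]

lemma sum_AT_succ {M : Type*} [AddCommMonoid M] (k N : ℕ) (f : (Fin (k+1) → ℕ) → M) :
    ∑ α ∈ Finset.Nat.antidiagonalTuple (k+1) N, f α
      = ∑ p ∈ Finset.range (N+1), ∑ β ∈ Finset.Nat.antidiagonalTuple k (N-p), f (Fin.cons p β) := by
  rw [Finset.sum_sigma' (Finset.range (N+1)) (fun p => Finset.Nat.antidiagonalTuple k (N-p))
    (fun p β => f (Fin.cons p β))]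
  apply Finset.sum_nbij' (i := fun α => ⟨α 0, Fin.tail α⟩)
    (j := fun x => Fin.cons x.1 x.2)
  · intro α hα
    rw [Finset.Nat.mem_antidiagonalTuple] at hα
    rw [Fin.sum_univ_succ] at hα
    refine Finset.mem_sigma.2 ⟨?_, ?_⟩
    · show α 0 ∈ Finset.range (N+1)
      exact Finset.mem_range.2 (by omega)
    · show Fin.tail α ∈ Finset.Nat.antidiagonalTuple k (N - α 0)
      rw [Finset.Nat.mem_antidiagonalTuple]
      simp only [Fin.tail]; omega
  · rintro ⟨p, β⟩ hx
    rw [Finset.mem_sigma] at hx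
    obtain ⟨h1, h2⟩ := hx
    rw [Finset.mem_range] at h1
    rw [Finset.Nat.mem_antidiagonalTuple] at h2
    have h1' : p < N + 1 := h1
    have h2' : ∑ x : Fin k, β x = N - p := h2
    rw [Finset.Nat.mem_antidiagonalTuple, Fin.sum_univ_succ]
    simp only [Fin.cons_zero, Fin.cons_succ]
    omega

  · intro α _; exact Fin.cons_self_tail α
  · rintro ⟨p, β⟩ _
    simp only [Fin.cons_zero, Fin.tail_cons]
  · intro α _
    rw [Fin.cons_self_tail]

lemma cf_step {m : ℕ} (a b r s p : ℕ) (β : Fin m → ℕ) :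
    cf (a+1) (b+1) r s (Fin.cons (p+1) β)
      = cf a (b+1) r s (Fin.cons p β) + cf (a+1) b r s (Fin.cons p β) := by
  rw [cf, cf, cf, hd_cons, hd_cons, AA_cons, AA_cons, AA_cons, AA_cons,
    Nat.choose_succ_succ p a, Nat.choose_succ_succ p b]
  ring

lemma recA (m a b r s : ℕ) :
    RHS (m+1) (a+1) (b+1) r s
      = wx0 * RHS (m+1) a (b+1) r s + wx0 * RHS (m+1) (a+1) b r s := by
  rw [RHS, RHS, RHS]
  rw [show (a+1)+(b+1) = (a+b+1)+1 from by ring, show a+(b+1) = a+b+1 from by ring,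
    show (a+1)+b = a+b+1 from by ring]
  rw [sum_AT_succ, sum_AT_succ, sum_AT_succ]
  rw [Finset.sum_range_succ']
  have hz : (∑ β ∈ Finset.Nat.antidiagonalTuple m ((a+b+1)+1 - 0),
      (cf (a+1) (b+1) r s (Fin.cons 0 β) : ℚ) • wrd (Fin.cons 0 β)) = 0 := by
    apply Finset.sum_eq_zero; intro β _
    rw [cf, hd_cons, Nat.choose_eq_zero_of_lt (Nat.succ_pos a),
      Nat.choose_eq_zero_of_lt (Nat.succ_pos b)]
    simp
  rw [hz, add_zero, Finset.mul_sum, Finset.mul_sum, ← Finset.sum_add_distrib]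
  apply Finset.sum_congr rfl; intro p hp
  rw [Finset.mul_sum, Finset.mul_sum, ← Finset.sum_add_distrib]
  rw [show (a+b+1)+1-(p+1) = a+b+1-p from by omega]
  apply Finset.sum_congr rfl; intro β _
  rw [mul_smul_comm, mul_smul_comm, ← add_smul]
  rw [wrd_cons, wrd_cons, pow_succ', mul_assoc wx0 (wx0^p) wy0,
    mul_assoc wx0 (wx0^p * wy0) (wrd β)]
  rw [← Nat.cast_add, cf_step]

lemma sum_choose_aux (c m : ℕ) :
    ∑ i ∈ Finset.range m, (c+i).choose c = (c+m).choose (c+1) := by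
  induction m with
  | zero => simp [Nat.choose_eq_zero_of_lt (Nat.lt_succ_self c)]
  | succ m ih =>
    rw [Finset.sum_range_succ, ih, show c+(m+1) = (c+m)+1 from rfl,
      Nat.choose_succ_succ (c+m) c, add_comm]

lemma VV (r s : ℕ) (hs : 1 ≤ s) :
    ∑ i ∈ Finset.range r, (r+s-i-2).choose (r-i-1) = (r+s-1).choose s := by
  have h1 : ∀ i ∈ Finset.range r, (r+s-i-2).choose (r-i-1)
      = (fun j => ((s-1) + j).choose j) (r-1-i) := by
    intro i hi
    rw [Finset.mem_range] at hi
    have e1 : r+s-i-2 = (s-1) + (r-1-i) := by omega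
    have e2 : r-i-1 = r-1-i := by omega
    rw [e1, e2]
  rw [Finset.sum_congr rfl h1, Finset.sum_range_reflect (fun j => ((s-1)+j).choose j) r]
  have h2 : ∀ j ∈ Finset.range r, ((s-1)+j).choose j = ((s-1)+j).choose (s-1) := by
    intro j _
    rw [← Nat.choose_symm (show j ≤ (s-1)+j by omega)]
    congr 1
    omega
  rw [Finset.sum_congr rfl h2, sum_choose_aux (s-1) r]
  congr 1 <;> omega

lemma wrd_zero {k : ℕ} : wrd (0 : Fin k → ℕ) = wy0 ^ k := by
  simp [wrd, List.prod_ofFn]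

lemma hd_eq {k : ℕ} (β : Fin (k+1) → ℕ) : hd β = β 0 := by
  rw [hd, dif_pos (Nat.succ_pos k)]
  rfl

lemma cf_cons_zero {k : ℕ} (b r s : ℕ) (hb : 1 ≤ b) (hr : 1 ≤ r) (hs : 1 ≤ s)
    (β : Fin (k+1) → ℕ) (hβ : ∑ j, β j = b) :
    cf 0 b (r+1) s (Fin.cons 0 β) = cf 0 b r s β := by
  rw [cf, cf, hd_cons, hd_eq]
  rw [Nat.choose_zero_right, Nat.choose_zero_right, one_mul, one_mul]
  rw [Nat.choose_eq_zero_of_lt (show 0 < b by omega), zero_mul, add_zero]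
  rw [AA_cons, Finset.sum_range_succ']
  have e1 : ∀ i ∈ Finset.range r,
      ((r+1)+s-(i+1)-2).choose ((r+1)-(i+1)-1) * dd ((i+1)+1) β
        = (r+s-i-2).choose (r-i-1) * dd (i+2) β := by
    intro i hi
    rw [Finset.mem_range] at hi
    congr 1
    · congr 1 <;> omega
  rw [Finset.sum_congr rfl e1, ← AA]
  -- remaining: AA r s β + C * dd 1 β = AA r s β + (β 0).choose b * AA s r β
  congr 1
  by_cases hdd : ∀ j : Fin (k+1), 1 ≤ (j:ℕ) → β j = 0
  · have htail : ∀ i : Fin k, β i.succ = 0 := fun i => hdd i.succ (by simp)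
    have hb0 : β 0 = b := by
      rw [Fin.sum_univ_succ] at hβ
      rw [Finset.sum_eq_zero (fun i _ => htail i)] at hβ
      omega
    rw [dd_eq_ite, if_pos hdd, mul_one, hb0, Nat.choose_self, one_mul]
    rw [AA]
    have h2 : ∀ i ∈ Finset.range s, (s+r-i-2).choose (s-i-1) * dd (i+2) β
        = (s+r-i-2).choose (s-i-1) := by
      intro i _
      rw [dd_eq_ite, if_pos (fun j hj => hdd j (by omega)), mul_one]
    rw [Finset.sum_congr rfl h2, VV s r hr]
    congr 1 <;> omega
  · have hdd0 : dd 1 β = 0 := by rw [dd_eq_ite, if_neg hdd]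
    push_neg at hdd
    obtain ⟨j, hj1, hj2⟩ := hdd
    have hj0 : j ≠ 0 := by
      intro h; rw [h] at hj1; simp at hj1
    have hblt : β 0 < b := by
      have h3 : β 0 + β j ≤ ∑ i, β i :=
        Finset.add_le_sum (f := β) (fun i _ => Nat.zero_le _)
          (Finset.mem_univ 0) (Finset.mem_univ j) (Ne.symm hj0)
      omega
    rw [hdd0, mul_zero, Nat.choose_eq_zero_of_lt hblt, zero_mul]

lemma cf_step0 {m : ℕ} (b r s p : ℕ) (hp : p ≤ b) (β : Fin m → ℕ) :
    cf 0 (b+1) r s (Fin.cons (p+1) β) = cf 0 b r s (Fin.cons p β) := by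
  rw [cf, cf, hd_cons, hd_cons, AA_cons, AA_cons, AA_cons, AA_cons,
    Nat.choose_succ_succ p b, Nat.choose_eq_zero_of_lt (show p < b+1 by omega),
    Nat.choose_zero_right, Nat.choose_zero_right, add_zero]

lemma recB (b r s : ℕ) (hr : 1 ≤ r) :
    RHS (r+s+1+1) 0 (b+1) (r+1) (s+1)
      = wy0 * RHS (r+s+1) 0 (b+1) r (s+1) + wx0 * RHS (r+s+1+1) 0 b (r+1) (s+1) := by
  rw [RHS, RHS, RHS]
  simp only [zero_add]
  rw [sum_AT_succ (r+s+1) (b+1), sum_AT_succ (r+s+1) b]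
  rw [Finset.sum_range_succ']
  -- p = 0 part
  have hz : (∑ β ∈ Finset.Nat.antidiagonalTuple (r+s+1) (b+1 - 0),
      (cf 0 (b+1) (r+1) (s+1) (Fin.cons 0 β) : ℚ) • wrd (Fin.cons 0 β))
      = wy0 * ∑ α ∈ Finset.Nat.antidiagonalTuple (r+s+1) (b+1),
          (cf 0 (b+1) r (s+1) α : ℚ) • wrd α := by
    rw [Nat.sub_zero, Finset.mul_sum]
    apply Finset.sum_congr rfl
    intro β hβ
    rw [Finset.Nat.mem_antidiagonalTuple] at hβ
    rw [cf_cons_zero (b+1) r (s+1) (by omega) hr (by omega) β hβ]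
    rw [wrd_cons, pow_zero, one_mul, mul_smul_comm]
  rw [hz]
  rw [add_comm]
  congr 1
  -- p ≥ 1 part
  rw [Finset.mul_sum]
  apply Finset.sum_congr rfl
  intro p hp
  rw [Finset.mem_range] at hp
  rw [Finset.mul_sum, show b+1-(p+1) = b-p from by omega]
  apply Finset.sum_congr rfl
  intro β _
  rw [cf_step0 (b:=b) (r:=r+1) (s:=s+1) (p:=p) (by omega) β]
  rw [mul_smul_comm, wrd_cons, wrd_cons, pow_succ', mul_assoc wx0 (wx0^p) wy0,
    mul_assoc wx0 (wx0^p * wy0) (wrd β)]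

lemma recB1 (b s : ℕ) :
    RHS (s+1+1) 0 (b+1) 1 (s+1)
      = wy0 * wd0 (List.replicate (b+1) 0 ++ List.replicate (s+1) 1)
        + wx0 * RHS (s+1+1) 0 b 1 (s+1) := by
  rw [RHS, RHS]
  simp only [zero_add]
  rw [sum_AT_succ (s+1) (b+1), sum_AT_succ (s+1) b]
  rw [Finset.sum_range_succ']
  have hz : (∑ β ∈ Finset.Nat.antidiagonalTuple (s+1) (b+1 - 0),
      (cf 0 (b+1) 1 (s+1) (Fin.cons 0 β) : ℚ) • wrd (Fin.cons 0 β))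
      = wy0 * wd0 (List.replicate (b+1) 0 ++ List.replicate (s+1) 1) := by
    rw [Nat.sub_zero]
    have hcf : ∀ β : Fin (s+1) → ℕ,
        cf 0 (b+1) 1 (s+1) (Fin.cons 0 β) = dd 1 β := by
      intro β
      rw [cf, hd_cons, AA_cons, Nat.choose_zero_right, one_mul,
        Nat.choose_eq_zero_of_lt (show 0 < b+1 by omega), zero_mul, add_zero]
      rw [Finset.sum_range_one]
      norm_num
    have hsingle : ∑ β ∈ Finset.Nat.antidiagonalTuple (s+1) (b+1),
        (cf 0 (b+1) 1 (s+1) (Fin.cons 0 β) : ℚ) • wrd (Fin.cons 0 β)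
        = wrd (Fin.cons 0 (Fin.cons (b+1) (0 : Fin s → ℕ))) := by
      rw [Finset.sum_eq_single (Fin.cons (b+1) (0 : Fin s → ℕ))]
      · rw [hcf, dd_eq_ite, if_pos]
        · norm_num
        · intro j hj
          have hj0 : j ≠ 0 := by intro h; rw [h] at hj; simp at hj
          obtain ⟨i, rfl⟩ := Fin.exists_succ_eq.2 hj0
          rw [Fin.cons_succ]
          rfl
      · intro β hβ hne
        rw [Finset.Nat.mem_antidiagonalTuple] at hβ
        rw [hcf, dd_eq_ite, if_neg, Nat.cast_zero, zero_smul]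
        intro hall
        apply hne
        have htail : ∀ i : Fin s, β i.succ = 0 := fun i => hall i.succ (by simp)
        have hb0 : β 0 = b+1 := by
          rw [Fin.sum_univ_succ, Finset.sum_eq_zero (fun i _ => htail i)] at hβ
          omega
        funext j
        rcases Fin.eq_zero_or_eq_succ j with h | ⟨i, rfl⟩
        · rw [h, hb0, Fin.cons_zero]
        · rw [htail i, Fin.cons_succ]; rfl
      · intro h
        exfalso; apply h
        rw [Finset.Nat.mem_antidiagonalTuple, Fin.sum_univ_succ, Fin.cons_zero]
        simp
    rw [hsingle, wrd_cons, wrd_cons, wrd_zero, pow_zero, one_mul, ← monomial,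
      mul_assoc (wx0^(b+1)) wy0 (wy0^s), ← pow_succ']
  rw [hz, add_comm]
  congr 1
  rw [Finset.mul_sum]
  apply Finset.sum_congr rfl
  intro p hp
  rw [Finset.mem_range] at hp
  rw [Finset.mul_sum, show b+1-(p+1) = b-p from by omega]
  apply Finset.sum_congr rfl
  intro β _
  rw [cf_step0 (b:=b) (r:=1) (s:=s+1) (p:=p) (by omega) β]
  rw [mul_smul_comm, wrd_cons, wrd_cons, pow_succ', mul_assoc wx0 (wx0^p) wy0,
    mul_assoc wx0 (wx0^p * wy0) (wrd β)]

lemma RHS00 (r s : ℕ) (hr : 1 ≤ r) (hs : 1 ≤ s) :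
    RHS (r+s) 0 0 r s = (((r+s).choose r : ℕ) : ℚ) • wd0 (List.replicate (r+s) 1) := by
  rw [RHS]
  simp only [add_zero]
  rw [Finset.Nat.antidiagonalTuple_zero_right, Finset.sum_singleton]
  have hhd : hd (0 : Fin (r+s) → ℕ) = 0 := by rw [hd]; split <;> rfl
  have hdd : ∀ t, dd t (0 : Fin (r+s) → ℕ) = 1 := by
    intro t; rw [dd_eq_ite, if_pos]
    intro j _; rfl
  have hAA : ∀ u v : ℕ, 1 ≤ v → AA u v (0 : Fin (r+s) → ℕ) = (u+v-1).choose v := by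
    intro u v hv
    have h2 : ∀ i ∈ Finset.range u, (u+v-i-2).choose (u-i-1) * dd (i+2) (0 : Fin (r+s) → ℕ)
        = (u+v-i-2).choose (u-i-1) := fun i _ => by rw [hdd, mul_one]
    rw [AA, Finset.sum_congr rfl h2, VV u v hv]
  rw [cf, hhd, Nat.choose_zero_right, one_mul, one_mul, hAA r s hs, hAA s r hr, wrd_zero]
  rw [wy0, wd0_pow]
  congr 1
  rw [Nat.cast_inj]
  obtain ⟨ρ, rfl⟩ : ∃ ρ, r = ρ+1 := ⟨r-1, by omega⟩
  rw [show ρ+1+s-1 = ρ+s from by omega, show s+(ρ+1)-1 = ρ+s from by omega,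
    show ρ+1+s = (ρ+s)+1 from by omega, Nat.choose_succ_succ (ρ+s) ρ]
  congr 1
  rw [← Nat.choose_symm (show s ≤ ρ+s by omega)]
  congr 1
  omega

lemma shW0_nil (w : List (Fin 2)) : shW0 [] w = wd0 w := by rw [shW0]

lemma shW0_cons_nil (c : Fin 2) (w : List (Fin 2)) : shW0 (c::w) [] = wd0 (c::w) := by
  rw [shW0]

lemma shW0_cons_cons (c d : Fin 2) (w1 w2 : List (Fin 2)) :
    shW0 (c::w1) (d::w2) = wd0 [c] * shW0 w1 (d::w2) + wd0 [d] * shW0 (c::w1) w2 := by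
  rw [shW0]

lemma main_lemma : ∀ N a b r s : ℕ, a+b+r+s = N → 1 ≤ r → 1 ≤ s →
    shW0 (List.replicate a 0 ++ List.replicate r 1)
        (List.replicate b 0 ++ List.replicate s 1)
      = RHS (r+s) a b r s := by
  intro N
  induction N using Nat.strong_induction_on with
  | _ N IH =>
  intro a b r s hN hr hs
  obtain ⟨s', rfl⟩ : ∃ s', s = s'+1 := ⟨s-1, by omega⟩
  rcases a with _|a
  · rcases b with _|b
    · -- a = b = 0
      simp only [List.replicate_zero, List.nil_append]
      rw [shW_yy, RHS00 r (s'+1) hr (by omega)]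
    · -- a = 0, b = b+1
      rcases r with _|r
      · omega
      rcases r with _|r
      · -- r = 1
        rw [show (List.replicate 0 0 ++ List.replicate 1 1 : List (Fin 2)) = [1] from rfl,
          show (List.replicate (b+1) 0 ++ List.replicate (s'+1) 1 : List (Fin 2))
            = 0 :: (List.replicate b 0 ++ List.replicate (s'+1) 1) from rfl,
          shW0_cons_cons, shW0_nil]
        have hIH := IH (0+b+1+(s'+1)) (by omega) 0 b 1 (s'+1) rfl le_rfl (by omega)
        rw [show (List.replicate 0 0 ++ List.replicate 1 1 : List (Fin 2)) = [1] from rfl]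
          at hIH
        rw [hIH, show (1+(s'+1)) = s'+1+1 from by omega, recB1 b s']
        rfl
      · -- r = r+2
        rw [show (List.replicate 0 0 ++ List.replicate (r+2) 1 : List (Fin 2))
            = 1 :: List.replicate (r+1) 1 from rfl,
          show (List.replicate (b+1) 0 ++ List.replicate (s'+1) 1 : List (Fin 2))
            = 0 :: (List.replicate b 0 ++ List.replicate (s'+1) 1) from rfl,
          shW0_cons_cons]
        have hIH1 := IH (0+(b+1)+(r+1)+(s'+1)) (by omega) 0 (b+1) (r+1) (s'+1) rfl
          (by omega) (by omega)
        rw [show (List.replicate 0 0 ++ List.replicate (r+1) 1 : List (Fin 2))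
            = List.replicate (r+1) 1 from rfl,
          show (List.replicate (b+1) 0 ++ List.replicate (s'+1) 1 : List (Fin 2))
            = 0 :: (List.replicate b 0 ++ List.replicate (s'+1) 1) from rfl] at hIH1
        have hIH2 := IH (0+b+(r+2)+(s'+1)) (by omega) 0 b (r+2) (s'+1) rfl
          (by omega) (by omega)
        rw [show (List.replicate 0 0 ++ List.replicate (r+2) 1 : List (Fin 2))
            = 1 :: List.replicate (r+1) 1 from rfl] at hIH2
        rw [hIH1, hIH2]
        have hrec := recB b (r+1) s' (by omega)
        rw [show ((r+2)+(s'+1)) = (r+1+s'+1+1) from by omega]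
        rw [show ((r+1)+(s'+1)) = (r+1+s'+1) from by omega]
        rw [show (r+2 : ℕ) = r+1+1 from rfl] at *
        rw [hrec]
        rfl
  · rcases b with _|b
    · -- a = a+1, b = 0
      obtain ⟨ρ, rfl⟩ : ∃ ρ, r = ρ+1 := ⟨r-1, by omega⟩
      rcases s' with _|s''
      · -- s = 1
        rw [show (List.replicate (a+1) 0 ++ List.replicate (ρ+1) 1 : List (Fin 2))
            = 0 :: (List.replicate a 0 ++ List.replicate (ρ+1) 1) from rfl,
          show (List.replicate 0 0 ++ List.replicate (0+1) 1 : List (Fin 2))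
            = 1 :: ([] : List (Fin 2)) from rfl,
          shW0_cons_cons, shW0_cons_nil]
        have hIH := IH (a+0+(ρ+1)+(0+1)) (by omega) a 0 (ρ+1) (0+1) rfl (by omega) le_rfl
        rw [show (List.replicate 0 0 ++ List.replicate (0+1) 1 : List (Fin 2))
            = 1 :: ([] : List (Fin 2)) from rfl] at hIH
        rw [hIH]
        have h1 := recB1 a ρ
        rw [RHS_symm (ρ+1+1) 0 (a+1) 1 (ρ+1), RHS_symm (ρ+1+1) 0 a 1 (ρ+1)] at h1
        rw [show ((ρ+1)+(0+1)) = ρ+1+1 from by omega] at *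
        rw [h1]
        exact add_comm _ _
      · -- s = s''+2
        rw [show (List.replicate (a+1) 0 ++ List.replicate (ρ+1) 1 : List (Fin 2))
            = 0 :: (List.replicate a 0 ++ List.replicate (ρ+1) 1) from rfl,
          show (List.replicate 0 0 ++ List.replicate (s''+1+1) 1 : List (Fin 2))
            = 1 :: List.replicate (s''+1) 1 from rfl,
          shW0_cons_cons]
        have hIH1 := IH (a+0+(ρ+1)+(s''+2)) (by omega) a 0 (ρ+1) (s''+2) rfl
          (by omega) (by omega)
        rw [show (List.replicate 0 0 ++ List.replicate (s''+2) 1 : List (Fin 2))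
            = 1 :: List.replicate (s''+1) 1 from rfl] at hIH1
        have hIH2 := IH ((a+1)+0+(ρ+1)+(s''+1)) (by omega) (a+1) 0 (ρ+1) (s''+1) rfl
          (by omega) (by omega)
        rw [show (List.replicate (a+1) 0 ++ List.replicate (ρ+1) 1 : List (Fin 2))
            = 0 :: (List.replicate a 0 ++ List.replicate (ρ+1) 1) from rfl,
          show (List.replicate 0 0 ++ List.replicate (s''+1) 1 : List (Fin 2))
            = List.replicate (s''+1) 1 from rfl] at hIH2
        rw [hIH1, hIH2]
        have h1 := recB a (s''+1) ρ (by omega)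
        rw [RHS_symm (s''+1+ρ+1+1) 0 (a+1) (s''+1+1) (ρ+1),
          RHS_symm (s''+1+ρ+1) 0 (a+1) (s''+1) (ρ+1),
          RHS_symm (s''+1+ρ+1+1) 0 a (s''+1+1) (ρ+1)] at h1
        rw [show ((ρ+1)+(s''+1+1)) = s''+1+ρ+1+1 from by omega,
          show ((ρ+1)+(s''+1)) = s''+1+ρ+1 from by omega,
          show (s''+2 : ℕ) = s''+1+1 from rfl] at *
        rw [h1]
        exact add_comm _ _
    · -- a = a+1, b = b+1
      rw [show (List.replicate (a+1) 0 ++ List.replicate r 1 : List (Fin 2))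
          = 0 :: (List.replicate a 0 ++ List.replicate r 1) from rfl,
        show (List.replicate (b+1) 0 ++ List.replicate (s'+1) 1 : List (Fin 2))
          = 0 :: (List.replicate b 0 ++ List.replicate (s'+1) 1) from rfl,
        shW0_cons_cons]
      have hIH1 := IH (a+(b+1)+r+(s'+1)) (by omega) a (b+1) r (s'+1) rfl hr (by omega)
      rw [show (List.replicate (b+1) 0 ++ List.replicate (s'+1) 1 : List (Fin 2))
          = 0 :: (List.replicate b 0 ++ List.replicate (s'+1) 1) from rfl] at hIH1
      have hIH2 := IH ((a+1)+b+r+(s'+1)) (by omega) (a+1) b r (s'+1) rfl hr (by omega)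
      rw [show (List.replicate (a+1) 0 ++ List.replicate r 1 : List (Fin 2))
          = 0 :: (List.replicate a 0 ++ List.replicate r 1) from rfl] at hIH2
      rw [hIH1, hIH2]
      have hrec := recA (r+s') a b r (s'+1)
      rw [show (r+(s'+1)) = r+s'+1 from rfl] at *
      rw [hrec]
      rfl

lemma cf_half (c u v : ℕ) {k : ℕ} (α : Fin k → ℕ) :
    (hd α).choose c * AA u v α
      = ∑ l ∈ Finset.Icc 1 u, (hd α).choose c
          * ((u+v-l-1).choose (u-l)
              * ∏ j : Fin k, (if l + 1 ≤ (j : ℕ) ∧ α j ≠ 0 then 0 else 1)) := by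
  rw [← Finset.mul_sum]
  congr 1
  rw [AA, show Finset.Icc 1 u = Finset.Ico 1 (u+1) from (Finset.Ico_add_one_right_eq_Icc 1 u).symm,
    Finset.sum_Ico_eq_sum_range]
  simp only [Nat.add_sub_cancel]
  apply Finset.sum_congr rfl
  intro i hi
  rw [Finset.mem_range] at hi
  have e1 : u+v-(1+i)-1 = u+v-i-2 := by omega
  have e2 : u-(1+i) = u-i-1 := by omega
  have e3 : (1+i)+1 = i+2 := by omega
  rw [e1, e2, e3]
  rfl


/-- Shuffle product formula:
`x^a y^r ⧢ x^b y^s = Σ_{α₁+⋯+α_{r+s}=a+b}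
  [Σ_{l=1}^{r} C(α₁,a)C(r+s−l−1,r−l)Π_{j=l+2}^{r+s}δ_{α_j,0}
   + Σ_{l=1}^{s} C(α₁,b)C(r+s−l−1,s−l)Π_{j=l+2}^{r+s}δ_{α_j,0}] x^{α₁}y⋯x^{α_{r+s}}y`. -/
theorem shuffle_height_one (a b r s : ℕ) (ha : 1 ≤ a) (hb : 1 ≤ b) (hr : 1 ≤ r) (hs : 1 ≤ s) :
    shH0 (wx0 ^ a * wy0 ^ r) (wx0 ^ b * wy0 ^ s) =
      ∑ α ∈ Finset.Nat.antidiagonalTuple (r + s) (a + b),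
        (((∑ l ∈ Finset.Icc 1 r,
              (α ⟨0, by omega⟩).choose a * (r + s - l - 1).choose (r - l) *
                ∏ j : Fin (r + s), (if l + 1 ≤ (j : ℕ) ∧ α j ≠ 0 then 0 else 1)) +
          (∑ l ∈ Finset.Icc 1 s,
              (α ⟨0, by omega⟩).choose b * (r + s - l - 1).choose (s - l) *
                ∏ j : Fin (r + s), (if l + 1 ≤ (j : ℕ) ∧ α j ≠ 0 then 0 else 1)) : ℕ) : ℚ) •
          (List.ofFn fun j : Fin (r + s) => wx0 ^ α j * wy0).prod := by
  rw [monomial, monomial, shH0_wd, main_lemma (a+b+r+s) a b r s rfl hr hs, RHS]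
  apply Finset.sum_congr rfl
  intro α hα
  have h0 : (α ⟨0, by omega⟩ : ℕ) = hd α := by
    rw [hd, dif_pos (show 0 < r+s by omega)]
  congr 1
  · rw [Nat.cast_inj, cf]
    congr 1
    · rw [cf_half a r s α]
      apply Finset.sum_congr rfl
      intro l hl
      rw [h0, mul_assoc]
    · rw [cf_half b s r α]
      apply Finset.sum_congr rfl
      intro l hl
      rw [Finset.mem_Icc] at hl
      rw [h0, mul_assoc, show s+r-l-1 = r+s-l-1 from by omega]
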